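/- Fix β>0. Let (a_N)_{N≥1} be a sequence with 0 < a_N < N·log 2 for every N; let λ_N > 0 be defined by Λ'_{N,β}(β·λ_N) = a_N, and set v_N = Λ''_{N,β}(β·λ_N). Then the following three conditions are equivalent: (1) liminf_{N→∞} λ_N > 0 and v_N → +∞; (2) liminf_{N→∞} λ_N > 0 and λ_N/N → 0; (3) liminf_{N→∞} a_N/log N > 0 and a_N/N → 0. -/

import Mathlib

open MeasureTheory Filter

noncomputable section

namespace CbetaE

/-- The "free energy": real part of the log-characteristic polynomial at 1. -/
def XN (N : ℕ) (θ : Fin N → ℝ) : ℝ :=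
  Real.log ‖∏ i, (1 - Complex.exp (θ i * Complex.I))‖

/-- Unnormalized density of the circular Jacobi `(β, δ)` ensemble. -/
def jacobiDensity (β δ : ℝ) (N : ℕ) (θ : Fin N → ℝ) : ℝ :=
  (∏ p ∈ Finset.univ.filter (fun p : Fin N × Fin N => p.1 < p.2),
      ‖Complex.exp (θ p.1 * Complex.I) - Complex.exp (θ p.2 * Complex.I)‖ ^ β)
  * ∏ i, ‖1 - Complex.exp (θ i * Complex.I)‖ ^ (2 * δ)

/-- Unnormalized circular Jacobi `(β, δ)` measure on `[0, 2π)^N`. -/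
def jacobiRaw (β δ : ℝ) (N : ℕ) : Measure (Fin N → ℝ) :=
  ((volume : Measure (Fin N → ℝ)).restrict
      {θ | ∀ i, θ i ∈ Set.Ico (0 : ℝ) (2 * Real.pi)}).withDensity
    fun θ => ENNReal.ofReal (jacobiDensity β δ N θ)

/-- The circular Jacobi `(β, δ)` ensemble: normalized probability measure. -/
def jacobi (β δ : ℝ) (N : ℕ) : Measure (Fin N → ℝ) :=
  (jacobiRaw β δ N Set.univ)⁻¹ • jacobiRaw β δ N

/-- The circular `β` ensemble `ℙ_β` of order `N`. -/
def cbe (β : ℝ) (N : ℕ) : Measure (Fin N → ℝ) := jacobi β 0 N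

/-- `ℙ_β[X_N ≥ x]`. -/
def tailP (β : ℝ) (N : ℕ) (x : ℝ) : ℝ := (cbe β N {θ | x ≤ XN N θ}).toReal

/-- Log-Laplace transform `Λ_{N,β}(z)` of `X_N` under `ℙ_β` (real argument `z > -1`). -/
def Lam (β : ℝ) (N : ℕ) (z : ℝ) : ℝ :=
  ∑ k ∈ Finset.range N,
    (Real.log (Real.Gamma (β / 2 * k + 1)) + Real.log (Real.Gamma (β / 2 * k + 1 + z))
      - 2 * Real.log (Real.Gamma (β / 2 * k + 1 + z / 2)))

/-- Legendre–Fenchel transform `Λ*_{N,β}(x) = sup_{h > -1} (x h - Λ_{N,β}(h))`. -/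
def LamStar (β : ℝ) (N : ℕ) (x : ℝ) : ℝ :=
  sSup ((fun h => x * h - Lam β N h) '' Set.Ioi (-1 : ℝ))

/-- `θ(x) = (1+2x) log(1+2x) - (1+x) log(1+x) - x log(4x)`. -/
def thetaFn (x : ℝ) : ℝ :=
  (1 + 2 * x) * Real.log (1 + 2 * x) - (1 + x) * Real.log (1 + x) - x * Real.log (4 * x)

/-- Inverse of `θ` on `[0, ∞)`. -/
def thetaInv : ℝ → ℝ := Function.invFunOn thetaFn (Set.Ici 0)

/-- The modified function `θ_{N,β}`. -/
def thetaN (β : ℝ) (N : ℕ) (x : ℝ) : ℝ :=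
  thetaFn x + ((β / 2 - 1) / (2 * (β / 2) * N)) *
    (Real.log 2 + Real.log (1 + x) - Real.log (1 + 2 * x))

/-- Inverse of `θ_{N,β}` on `[0, ∞)`. -/
def thetaNInv (β : ℝ) (N : ℕ) : ℝ → ℝ := Function.invFunOn (thetaN β N) (Set.Ici 0)

/-- `φ(s) = (1/s)(1/2 - 1/s + 1/(e^s - 1))`. -/
def phiFn (s : ℝ) : ℝ := (1 / s) * (1 / 2 - 1 / s + 1 / (Real.exp s - 1))

/-- `φ_β(s) = φ(s) - β'² φ(sβ')`. -/
def phiB (β s : ℝ) : ℝ := phiFn s - (β / 2) ^ 2 * phiFn (s * (β / 2))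

/-- `η_β(s)`; equal to `0` when `β = 2`. -/
def etaB (β s : ℝ) : ℝ :=
  if β = 2 then 0
  else s * (β / 2) * phiB β s / ((Real.exp (s * (β / 2)) - 1) * ((1 - (β / 2) ^ 2) / 12))

/-- `ζ'(-1)`, the derivative of the Riemann zeta function at `-1` (a real number). -/
def zetaD : ℝ := (deriv riemannZeta (-1)).re

/-- The constant `A_β`. -/
def Abeta (β : ℝ) : ℝ :=
  (∫ s in Set.Ioi (0 : ℝ), (1 - Real.exp (-(s / 2))) ^ 2 * etaB β s / s)
  + ∫ t in Set.Ioi (1 : ℝ), ∫ s in Set.Ioi (0 : ℝ),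
      ((2 * Real.exp (-(s * t / 2)) - Real.exp (-(s * t))) / t) * deriv (etaB β) s

/-- The constant `C_β`. -/
def Cbeta (β : ℝ) : ℝ :=
  ((2 : ℝ) ^ (1 / (12 * (β / 2))) * Real.pi ^ ((β / 2 - 3) / 4) / β) *
    Real.exp ((1 - (β / 2) ^ 2) / (12 * (β / 2)) * (Abeta β + Real.log (β / 2))
      + (β / 2) * zetaD)

/-- The Barnes `G`-function (real argument), via its Weierstrass product. -/
def barnesG (x : ℝ) : ℝ :=
  Real.exp (((x - 1) * (Real.log (2 * Real.pi) - 1)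
      - (x - 1) ^ 2 * (Real.eulerMascheroniConstant + 1)) / 2) *
    ∏' k : ℕ, ((1 + (x - 1) / (k + 1)) ^ (k + 1)
      * Real.exp (-(x - 1) + (x - 1) ^ 2 / (2 * (k + 1))))

/-- `Ψ(z) = G(1 + z/2)² / G(1 + z)`. -/
def PsiFn (z : ℝ) : ℝ := barnesG (1 + z / 2) ^ 2 / barnesG (1 + z)

/-- `m(z) = log Γ(1+z) - 2 log Γ(1+z/2)`. -/
def mFn (z : ℝ) : ℝ := Real.log (Real.Gamma (1 + z)) - 2 * Real.log (Real.Gamma (1 + z / 2))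

/-- The function `f(N, β, ϑ)` from Theorem 1.11 (iii). -/
def fLD (β : ℝ) (N : ℕ) (v : ℝ) : ℝ :=
  (β / 2) * ((N : ℝ) * v) ^ 2 * Real.log (1 + 1 / (4 * v * (1 + v)))
    + (((N : ℝ) ^ 2 * (β / 2) - (N : ℝ) * ((β / 2) - 1)) / 2) * Real.log (1 + v ^ 2 / (1 + 2 * v))

/-- The rate function `I(x)`. -/
def Ifun (x : ℝ) : ℝ :=
  -((1 - 4 * x ^ 2) / 2) * Real.log (1 + 2 * x) - x ^ 2 * Real.log (4 * x)
    + (1 - x ^ 2) * Real.log (1 + x)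

end CbetaE

namespace CbetaEAux
open Real


/-- log of Gamma -/
def lgam : ℝ → ℝ := Real.log ∘ Real.Gamma

/-- digamma -/
def psi (x : ℝ) : ℝ := deriv lgam x

lemma ne_neg_nat {x : ℝ} (hx : 0 < x) : ∀ m : ℕ, x ≠ -m := by
  intro m h
  have : (0:ℝ) ≤ m := Nat.cast_nonneg m
  rw [h] at hx; linarith

lemma lgam_diff {x : ℝ} (hx : 0 < x) : DifferentiableAt ℝ lgam x :=
  (Real.differentiableAt_Gamma (ne_neg_nat hx)).log (Real.Gamma_ne_zero (ne_neg_nat hx))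

lemma lgam_hasDeriv {x : ℝ} (hx : 0 < x) : HasDerivAt lgam (psi x) x :=
  (lgam_diff hx).hasDerivAt

lemma lgam_rec {x : ℝ} (hx : 0 < x) : lgam (x + 1) = lgam x + Real.log x := by
  simp only [lgam, Function.comp_apply, Real.Gamma_add_one hx.ne',
    Real.log_mul hx.ne' (Real.Gamma_pos_of_pos hx).ne', add_comm]

lemma psi_rec {x : ℝ} (hx : 0 < x) : psi (x + 1) = psi x + 1 / x := by
  have : psi (x + 1) = deriv (fun y => lgam (y + 1)) x := by
    rw [psi, deriv_comp_add_const]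
  rw [this, one_div, ← Real.deriv_log, psi,
    ← deriv_add (lgam_diff hx) (Real.differentiableAt_log hx.ne')]
  apply Filter.EventuallyEq.deriv_eq
  filter_upwards [eventually_gt_nhds hx] using fun y hy => lgam_rec hy

lemma psi_mono {x y : ℝ} (hx : 0 < x) (hxy : x ≤ y) : psi x ≤ psi y := by
  rcases eq_or_lt_of_le hxy with rfl | hlt
  · exact le_refl _
  have hy : 0 < y := hx.trans hlt
  calc psi x ≤ slope lgam x y :=
        convexOn_log_Gamma.deriv_le_slope (Set.mem_Ioi.2 hx) (Set.mem_Ioi.2 hy) hlt (lgam_diff hx)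
    _ ≤ psi y :=
        convexOn_log_Gamma.slope_le_deriv (Set.mem_Ioi.2 hx) (Set.mem_Ioi.2 hy) hlt (lgam_diff hy)

lemma psi_add_nat {x : ℝ} (hx : 0 < x) (m : ℕ) :
    psi (x + m) = psi x + ∑ n ∈ Finset.range m, 1 / (x + n) := by
  induction m with
  | zero => simp
  | succ m ih =>
      have hxm : 0 < x + m := by positivity
      have : x + (m + 1 : ℕ) = (x + m) + 1 := by push_cast; ring
      rw [this, psi_rec hxm, ih, Finset.sum_range_succ]
      ring


lemma psi_diff_le_of_le {z : ℝ} (hz : 0 < z) (K : ℕ) {y : ℝ} (hzy : z ≤ y) (hyK : y ≤ z + K) :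
    psi y - psi z ≤ K / z := by
  have h1 : psi y ≤ psi (z + K) := psi_mono (hz.trans_le hzy) hyK
  have h2 : psi (z + K) = psi z + ∑ n ∈ Finset.range K, 1 / (z + n) := psi_add_nat hz K
  have h3 : ∑ n ∈ Finset.range K, 1 / (z + n) ≤ ∑ n ∈ Finset.range K, 1 / z := by
    apply Finset.sum_le_sum
    intro i _
    apply one_div_le_one_div_of_le hz
    have : (0:ℝ) ≤ i := Nat.cast_nonneg i
    linarith
  have h4 : ∑ n ∈ Finset.range K, (1:ℝ) / z = K / z := by
    rw [Finset.sum_const, Finset.card_range]; ring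
  linarith

/-- The key series for digamma differences. -/
lemma psi_hasSum {z y : ℝ} (hz : 0 < z) (hzy : z ≤ y) :
    HasSum (fun n : ℕ => 1 / (z + n) - 1 / (y + n)) (psi y - psi z) := by
  have hy : 0 < y := hz.trans_le hzy
  have hnn : ∀ n : ℕ, 0 ≤ 1 / (z + n) - 1 / (y + n) := by
    intro n
    have h1 : 0 < z + n := by positivity
    have : 1 / (y + n) ≤ 1 / (z + n) := by
      apply one_div_le_one_div_of_le h1; linarith
    linarith
  rw [hasSum_iff_tendsto_nat_of_nonneg hnn]
  have key : ∀ m : ℕ, ∑ n ∈ Finset.range m, (1 / (z + n) - 1 / (y + n)) =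
      (psi y - psi z) - (psi (y + m) - psi (z + m)) := by
    intro m
    rw [Finset.sum_sub_distrib]
    have h1 := psi_add_nat hz m
    have h2 := psi_add_nat hy m
    have e1 : ∑ n ∈ Finset.range m, 1 / (z + n) = psi (z + m) - psi z := by rw [h1]; ring
    have e2 : ∑ n ∈ Finset.range m, 1 / (y + n) = psi (y + m) - psi y := by rw [h2]; ring
    rw [e1, e2]; ring
  simp only [key]
  have : Tendsto (fun m : ℕ => psi (y + m) - psi (z + m)) atTop (nhds 0) := by
    set K : ℕ := ⌈y - z⌉₊ with hK
    apply squeeze_zero (g := fun m : ℕ => K / (z + m))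
    · intro m
      have hzm : 0 < z + m := by positivity
      have : psi (z + m) ≤ psi (y + m) := psi_mono hzm (by linarith)
      linarith
    · intro m
      have hzm : 0 < z + m := by positivity
      apply psi_diff_le_of_le hzm K (by linarith)
      have : y - z ≤ K := Nat.le_ceil _
      linarith
    · have h1 : Tendsto (fun m : ℕ => z + (m:ℝ)) atTop atTop :=
        tendsto_atTop_add_const_left _ _ tendsto_natCast_atTop_atTop
      have h2 : Tendsto (fun m : ℕ => (K:ℝ) / (z + m)) atTop (nhds 0) :=
        Tendsto.div_atTop tendsto_const_nhds h1
      exact h2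
  have := (tendsto_const_nhds (x := psi y - psi z) (f := atTop (α := ℕ))).sub this
  simpa using this

/-- telescoping sum -/
lemma tele_hasSum {c : ℝ} (hc : 0 < c) :
    HasSum (fun n : ℕ => 1 / (c + n) - 1 / (c + n + 1)) (1 / c) := by
  have hnn : ∀ n : ℕ, 0 ≤ 1 / (c + n) - 1 / (c + n + 1) := by
    intro n
    have h1 : 0 < c + n := by positivity
    have : 1 / (c + n + 1) ≤ 1 / (c + n) := by
      apply one_div_le_one_div_of_le h1; linarith
    linarith
  rw [hasSum_iff_tendsto_nat_of_nonneg hnn]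
  have key : ∀ m : ℕ, ∑ n ∈ Finset.range m, (1 / (c + n) - 1 / (c + n + 1)) =
      1 / c - 1 / (c + m) := by
    intro m
    have := Finset.sum_range_sub' (fun n : ℕ => 1 / (c + n)) m
    simp only [Nat.cast_zero, add_zero] at this
    rw [← this]
    apply Finset.sum_congr rfl
    intro i _
    push_cast
    ring_nf
  simp only [key]
  have h1 : Tendsto (fun m : ℕ => c + (m:ℝ)) atTop atTop :=
    tendsto_atTop_add_const_left _ _ tendsto_natCast_atTop_atTop
  have h2 : Tendsto (fun m : ℕ => 1 / (c + (m:ℝ))) atTop (nhds 0) :=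
    Tendsto.div_atTop tendsto_const_nhds h1
  have := (tendsto_const_nhds (x := 1 / c) (f := atTop (α := ℕ))).sub h2
  simpa using this

/-- trigamma (as a series) -/
def psi1 (y : ℝ) : ℝ := ∑' n : ℕ, 1 / (y + n) ^ 2

lemma sq_term_le_tele {y : ℝ} (hy : 0 < y) (n : ℕ) :
    1 / (y + n) ^ 2 ≤ (1 + 1 / y) * (1 / (y + n) - 1 / (y + n + 1)) := by
  have h1 : 0 < y + n := by positivity
  have h2 : 0 < y + n + 1 := by linarith
  rw [div_sub_div _ _ h1.ne' h2.ne']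
  have e : (1 * (y + n + 1) - (y + n) * 1) = 1 := by ring
  rw [e, mul_one_div, div_le_div_iff₀ (by positivity) (by positivity)]
  have h3 : (0:ℝ) ≤ n := Nat.cast_nonneg n
  have h4 : (1 + 1/y) = (y+1)/y := by field_simp
  rw [h4, div_mul_eq_mul_div, le_div_iff₀ hy]
  nlinarith [sq_nonneg (y+n)]

lemma tele_ge_sq_term {y : ℝ} (hy : 0 < y) (n : ℕ) :
    1 / (y + n) - 1 / (y + n + 1) ≤ 1 / (y + n) ^ 2 := by
  have h1 : 0 < y + n := by positivity
  have h2 : 0 < y + n + 1 := by linarith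
  rw [div_sub_div _ _ h1.ne' h2.ne']
  have e : (1 * (y + n + 1) - (y + n) * 1) = 1 := by ring
  rw [e]
  apply div_le_div_of_nonneg_left one_pos.le (by positivity)
  nlinarith

lemma psi1_summable {y : ℝ} (hy : 0 < y) : Summable (fun n : ℕ => 1 / (y + n) ^ 2) := by
  apply Summable.of_nonneg_of_le (fun n => by positivity) (sq_term_le_tele hy)
  exact ((tele_hasSum hy).summable).mul_left _

lemma psi1_hasSum {y : ℝ} (hy : 0 < y) : HasSum (fun n : ℕ => 1 / (y + n) ^ 2) (psi1 y) :=
  (psi1_summable hy).hasSum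

lemma psi1_le {y : ℝ} (hy : 0 < y) : psi1 y ≤ 1 / y + 1 / y ^ 2 := by
  have h := hasSum_le (sq_term_le_tele hy) (psi1_hasSum hy) ((tele_hasSum hy).mul_left (1 + 1/y))
  calc psi1 y ≤ (1 + 1/y) * (1/y) := h
    _ = 1 / y + 1 / y ^ 2 := by field_simp

lemma le_psi1 {y : ℝ} (hy : 0 < y) : 1 / y ≤ psi1 y :=
  hasSum_le (tele_ge_sq_term hy) (tele_hasSum hy) (psi1_hasSum hy)

lemma psi1_pos {y : ℝ} (hy : 0 < y) : 0 < psi1 y := lt_of_lt_of_le (by positivity) (le_psi1 hy)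

lemma psi_sub_hasSum {u : ℝ} (hu : 0 < u) :
    HasSum (fun n : ℕ => 1 / (1 + n) - 1 / (u + n)) (psi u - psi 1) := by
  rcases le_total 1 u with h | h
  · exact psi_hasSum one_pos h
  · have := (psi_hasSum hu h).neg
    simp only [neg_sub] at this
    exact this

lemma hasDerivAt_psi {y : ℝ} (hy : 0 < y) : HasDerivAt psi (psi1 y) y := by
  set m : ℝ := min y 1 / 2 with hm
  have hm0 : 0 < m := by
    have := lt_min hy one_pos
    positivity
  have hmy : m < y := by
    have h1 : min y 1 ≤ y := min_le_left _ _
    have h2 : 0 < min y 1 := lt_min hy one_pos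
    nlinarith
  have hm1 : m < 1 := by
    have h1 : min y 1 ≤ 1 := min_le_right _ _
    have h2 : 0 < min y 1 := lt_min hy one_pos
    nlinarith
  -- the series
  have key : HasDerivAt (fun u => ∑' n : ℕ, (1 / (1 + (n:ℝ)) - 1 / (u + n)))
      (∑' n : ℕ, 1 / (y + (n:ℝ)) ^ 2) y := by
    apply hasDerivAt_tsum_of_isPreconnected
      (u := fun n : ℕ => 1 / (m + (n:ℝ)) ^ 2)
      (t := Set.Ioi m) (y₀ := 1)
      (g' := fun n u => 1 / (u + (n:ℝ)) ^ 2)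
    · exact psi1_summable hm0
    · exact isOpen_Ioi
    · exact (convex_Ioi m).isPreconnected
    · intro n u hu
      have hun : 0 < u + n := by
        have : m < u := hu
        have : (0:ℝ) ≤ n := Nat.cast_nonneg n
        linarith
      have h1 : HasDerivAt (fun u : ℝ => u + (n:ℝ)) 1 u := (hasDerivAt_id u).add_const _
      have h2 : HasDerivAt (fun u : ℝ => (u + (n:ℝ))⁻¹) (-1 / (u + n) ^ 2) u := by
        simpa using h1.fun_inv hun.ne'
      have h3 := h2.const_sub (1 / (1 + (n:ℝ)))
      have : ∀ v : ℝ, 1 / (1 + (n:ℝ)) - (v + (n:ℝ))⁻¹ = 1 / (1 + (n:ℝ)) - 1 / (v + n) := by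
        intro v; simp [one_div]
      simp only [this] at h3
      convert h3 using 1
      ring
    · intro n u hu
      have hu' : m < u := hu
      have hun : 0 < u + n := by
        have : (0:ℝ) ≤ n := Nat.cast_nonneg n
        linarith
      rw [Real.norm_eq_abs, abs_of_nonneg (by positivity)]
      apply div_le_div_of_nonneg_left one_pos.le (by positivity)
      have : (0:ℝ) ≤ n := Nat.cast_nonneg n
      nlinarith
    · exact hm1
    · simpa using summable_zero
    · exact hmy
  -- psi equals the series plus constant on Ioi m ∩ Ioi 0... on Ioi m' where m' = m
  have heq : psi =ᶠ[nhds y] (fun u => psi 1 + ∑' n : ℕ, (1 / (1 + (n:ℝ)) - 1 / (u + n))) := by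
    filter_upwards [eventually_gt_nhds (lt_of_le_of_lt (le_of_eq rfl) hmy : m < y)] with u hu
    have hu0 : 0 < u := hm0.trans hu
    have := (psi_sub_hasSum hu0).tsum_eq
    rw [this]; ring
  have := (key.const_add (psi 1)).congr_of_eventuallyEq heq
  simpa [psi1] using this

lemma psi_diff_ge {z y : ℝ} (hz : 0 < z) (hzy : z ≤ y) : (y - z) / y ≤ psi y - psi z := by
  have hy : 0 < y := hz.trans_le hzy
  have hcomp : ∀ n : ℕ, (y - z) * (1 / (y + n) - 1 / (y + n + 1)) ≤ 1 / (z + n) - 1 / (y + n) := by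
    intro n
    have h1 : 0 < z + n := by positivity
    have h2 : 0 < y + n := by positivity
    have h3 : 0 < y + n + 1 := by linarith
    rw [div_sub_div _ _ h2.ne' h3.ne', div_sub_div _ _ h1.ne' h2.ne']
    have e1 : 1 * (y + n + 1) - (y + n) * 1 = 1 := by ring
    have e2 : 1 * (y + n) - (z + n) * 1 = y - z := by ring
    rw [e1, e2, mul_one_div]
    exact div_le_div_of_nonneg_left (by linarith) (mul_pos h1 h2) (by nlinarith)
  have := hasSum_le hcomp ((tele_hasSum hy).mul_left (y - z)) (psi_hasSum hz hzy)
  calc (y - z) / y = (y - z) * (1 / y) := by ring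
    _ ≤ psi y - psi z := this

lemma psi_diff_le {z y : ℝ} (hz : 0 < z) (hzy : z ≤ y) :
    psi y - psi z ≤ (y - z) * (1 / z + 1 / z ^ 2) := by
  have hcomp : ∀ n : ℕ, 1 / (z + n) - 1 / (y + n) ≤
      ((y - z) * (1 + 1 / z)) * (1 / (z + n) - 1 / (z + n + 1)) := by
    have hy : 0 < y := hz.trans_le hzy
    intro n
    have h1 : 0 < z + n := by positivity
    have h2 : 0 < y + n := by positivity
    have step1 : 1 / (z + n) - 1 / (y + n) ≤ (y - z) * (1 / (z + n) ^ 2) := by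
      rw [div_sub_div _ _ h1.ne' h2.ne']
      have e2 : 1 * (y + n) - (z + n) * 1 = y - z := by ring
      rw [e2, mul_one_div]
      exact div_le_div_of_nonneg_left (by linarith) (pow_pos h1 2) (by nlinarith)
    have step2 : (y - z) * (1 / (z + n) ^ 2) ≤
        ((y - z) * (1 + 1 / z)) * (1 / (z + n) - 1 / (z + n + 1)) := by
      rw [mul_assoc]
      apply mul_le_mul_of_nonneg_left _ (by linarith)
      exact sq_term_le_tele hz n
    linarith
  have := hasSum_le hcomp (psi_hasSum hz hzy) ((tele_hasSum hz).mul_left _)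
  calc psi y - psi z ≤ (y - z) * (1 + 1 / z) * (1 / z) := this
    _ = (y - z) * (1 / z + 1 / z ^ 2) := by field_simp

/-- local copy of Lam -/
def LamD (β : ℝ) (N : ℕ) (z : ℝ) : ℝ :=
  ∑ k ∈ Finset.range N,
    (Real.log (Real.Gamma (β / 2 * k + 1)) + Real.log (Real.Gamma (β / 2 * k + 1 + z))
      - 2 * Real.log (Real.Gamma (β / 2 * k + 1 + z / 2)))

def GG (b : ℝ) (N : ℕ) (z : ℝ) : ℝ :=
  ∑ k ∈ Finset.range N, (psi (b * k + 1 + z) - psi (b * k + 1 + z / 2))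

def GG' (b : ℝ) (N : ℕ) (h : ℝ) : ℝ :=
  ∑ k ∈ Finset.range N, (psi1 (b * k + 1 + h) - psi1 (b * k + 1 + h / 2) / 2)

lemma hasDerivAt_LamD {β : ℝ} {N : ℕ} (hβ : 0 < β) {z : ℝ} (hz : 0 < z) :
    HasDerivAt (LamD β N) (GG (β / 2) N z) z := by
  unfold LamD GG
  apply HasDerivAt.fun_sum
  intro k _
  have hb2 : 0 < β / 2 := by linarith
  have hx : (0:ℝ) < β / 2 * k + 1 + z := by positivity
  have hx2 : (0:ℝ) < β / 2 * k + 1 + z / 2 := by positivity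
  have i1 : HasDerivAt (fun w : ℝ => β / 2 * k + 1 + w) 1 z := (hasDerivAt_id z).const_add _
  have i2 : HasDerivAt (fun w : ℝ => β / 2 * k + 1 + w / 2) ((1:ℝ) / 2) z :=
    ((hasDerivAt_id z).div_const 2).const_add _
  have d1 : HasDerivAt (fun w : ℝ => lgam (β / 2 * k + 1 + w)) (psi (β / 2 * k + 1 + z) * 1) z :=
    (lgam_hasDeriv hx).comp z i1
  have d2 : HasDerivAt (fun w : ℝ => lgam (β / 2 * k + 1 + w / 2))
      (psi (β / 2 * k + 1 + z / 2) * (1 / 2)) z := (lgam_hasDeriv hx2).comp (h₂ := lgam) z i2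
  have d3 := (d1.sub (d2.const_mul 2)).const_add (Real.log (Real.Gamma (β / 2 * k + 1)))
  have : HasDerivAt (fun w : ℝ => Real.log (Real.Gamma (β / 2 * k + 1)) +
      Real.log (Real.Gamma (β / 2 * k + 1 + w)) - 2 * Real.log (Real.Gamma (β / 2 * k + 1 + w / 2)))
      (psi (β / 2 * k + 1 + z) * 1 - 2 * (psi (β / 2 * k + 1 + z / 2) * (1 / 2))) z := by
    have e : (fun w : ℝ => Real.log (Real.Gamma (β / 2 * k + 1)) +
        Real.log (Real.Gamma (β / 2 * k + 1 + w)) - 2 * Real.log (Real.Gamma (β / 2 * k + 1 + w / 2)))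
        = fun w : ℝ => Real.log (Real.Gamma (β / 2 * k + 1)) +
        (lgam (β / 2 * k + 1 + w) - 2 * lgam (β / 2 * k + 1 + w / 2)) := by
      funext w; simp [lgam]; ring
    rw [e]; exact d3
  exact this.congr_deriv (by ring)

lemma hasDerivAt_GG {b : ℝ} {N : ℕ} (hb : 0 < b) {h : ℝ} (hh : 0 < h) :
    HasDerivAt (GG b N) (GG' b N h) h := by
  unfold GG GG'
  apply HasDerivAt.fun_sum
  intro k _
  have hx : (0:ℝ) < b * k + 1 + h := by positivity
  have hx2 : (0:ℝ) < b * k + 1 + h / 2 := by positivity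
  have i1 : HasDerivAt (fun w : ℝ => b * k + 1 + w) 1 h := (hasDerivAt_id h).const_add _
  have i2 : HasDerivAt (fun w : ℝ => b * k + 1 + w / 2) ((1:ℝ) / 2) h :=
    ((hasDerivAt_id h).div_const 2).const_add _
  have d1 : HasDerivAt (fun w : ℝ => psi (b * k + 1 + w)) (psi1 (b * k + 1 + h) * 1) h :=
    (hasDerivAt_psi hx).comp h i1
  have d2 : HasDerivAt (fun w : ℝ => psi (b * k + 1 + w / 2))
      (psi1 (b * k + 1 + h / 2) * (1 / 2)) h := (hasDerivAt_psi hx2).comp h i2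
  convert d1.fun_sub d2 using 1; ring

lemma deriv_LamD_eq {β : ℝ} {N : ℕ} (hβ : 0 < β) {z : ℝ} (hz : 0 < z) :
    deriv (LamD β N) z = GG (β / 2) N z := (hasDerivAt_LamD hβ hz).deriv

lemma deriv2_LamD_eq {β : ℝ} {N : ℕ} (hβ : 0 < β) {h : ℝ} (hh : 0 < h) :
    deriv (deriv (LamD β N)) h = GG' (β / 2) N h := by
  have heq : deriv (LamD β N) =ᶠ[nhds h] GG (β / 2) N := by
    filter_upwards [eventually_gt_nhds hh] with w hw
    exact deriv_LamD_eq hβ hw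
  rw [heq.deriv_eq]
  exact (hasDerivAt_GG (by linarith) hh).deriv

lemma har_low {b c : ℝ} (hb : 0 < b) (hc : 0 < c) (N : ℕ) :
    (Real.log (b * N + c) - Real.log c) / b ≤ ∑ k ∈ Finset.range N, 1 / (b * k + c) := by
  induction N with
  | zero => simp
  | succ N ih =>
    rw [Finset.sum_range_succ]
    have hbn : 0 < b * N + c := by positivity
    have hbn1 : 0 < b * N + b + c := by positivity
    have key : Real.log (b * (N+1) + c) - Real.log (b * N + c) ≤ b / (b * N + c) := by
      have h1 : Real.log (b * (N+1) + c) - Real.log (b * N + c)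
          = Real.log ((b * (N+1) + c) / (b * N + c)) := by
        rw [Real.log_div (by positivity) hbn.ne']
      rw [h1]
      have h2 := Real.log_le_sub_one_of_pos (show (0:ℝ) < (b * (N+1) + c) / (b * N + c) by positivity)
      have e : (b * (N+1) + c) / (b * N + c) - 1 = b / (b * N + c) := by
        field_simp
        ring
      linarith [h2, e.symm.le, e.le]
    have key2 : (Real.log (b * (N+1) + c) - Real.log (b * N + c)) / b ≤ 1 / (b * N + c) := by
      calc (Real.log (b * (N+1) + c) - Real.log (b * N + c)) / b ≤ (b / (b * N + c)) / b := by
            gcongr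
        _ = 1 / (b * N + c) := by
            rw [div_div, div_eq_div_iff (by positivity) hbn.ne']
            ring
    push_cast
    have : (Real.log (b * (↑N+1) + c) - Real.log c) / b
        = (Real.log (b * ↑N + c) - Real.log c) / b
          + (Real.log (b * (↑N+1) + c) - Real.log (b * ↑N + c)) / b := by ring
    rw [this]
    exact add_le_add ih key2

lemma har_up {b c : ℝ} (hb : 0 < b) (hc : 0 < c) (N : ℕ) :
    ∑ k ∈ Finset.range N, 1 / (b * k + c)
      ≤ ((c + b) / (c * b)) * (Real.log (b * N + c) - Real.log c) := by
  induction N with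
  | zero => simp
  | succ N ih =>
    rw [Finset.sum_range_succ]
    have hbn : 0 < b * N + c := by positivity
    have hbn1 : 0 < b * N + b + c := by positivity
    have key : b / (b * N + b + c) ≤ Real.log (b * (N+1) + c) - Real.log (b * N + c) := by
      have h2 := Real.log_le_sub_one_of_pos (show (0:ℝ) < (b * N + c) / (b * (N+1) + c) by positivity)
      have h3 : Real.log ((b * N + c) / (b * (N+1) + c))
          = Real.log (b * N + c) - Real.log (b * (N+1) + c) := by
        rw [Real.log_div hbn.ne' (by positivity)]
      have e : (b * N + c) / (b * (N+1) + c) - 1 = -(b / (b * N + b + c)) := by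
        rw [div_sub_one (by positivity : (b * (N+1) + c) ≠ 0)]
        rw [div_eq_iff (by positivity : (b * (N+1) + c) ≠ 0)]
        field_simp
        ring
      rw [h3, e] at h2
      linarith
    have key2 : 1 / (b * N + c) ≤ ((c + b) / (c * b)) * (b / (b * N + b + c)) := by
      rw [div_mul_div_comm, div_le_div_iff₀ hbn (by positivity)]
      nlinarith [mul_nonneg (mul_nonneg (mul_nonneg hb.le hb.le) hb.le) (Nat.cast_nonneg N : (0:ℝ) ≤ N)]
    have key3 : 1 / (b * N + c)
        ≤ ((c + b) / (c * b)) * (Real.log (b * (N+1) + c) - Real.log (b * N + c)) := by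
      calc 1 / (b * N + c) ≤ ((c + b) / (c * b)) * (b / (b * N + b + c)) := key2
        _ ≤ ((c + b) / (c * b)) * (Real.log (b * (N+1) + c) - Real.log (b * N + c)) := by
            apply mul_le_mul_of_nonneg_left key (by positivity)
    push_cast
    have e2 : ((c + b) / (c * b)) * (Real.log (b * (↑N+1) + c) - Real.log c)
        = ((c + b) / (c * b)) * (Real.log (b * ↑N + c) - Real.log c)
          + ((c + b) / (c * b)) * (Real.log (b * (↑N+1) + c) - Real.log (b * ↑N + c)) := by ring
    rw [e2]
    exact add_le_add ih key3

lemma sq_aux {b c : ℝ} (hb : 0 < b) (hc : 0 < c) (N : ℕ) :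
    ∑ k ∈ Finset.range N, 1 / (b * (k + 1) + c) ^ 2 ≤ (1 / b) * (1 / c - 1 / (b * N + c)) := by
  induction N with
  | zero => simp
  | succ N ih =>
    rw [Finset.sum_range_succ]
    have hbn : 0 < b * N + c := by positivity
    have hbn1 : 0 < b * N + b + c := by positivity
    have key : 1 / (b * (N + 1) + c) ^ 2 ≤ (1 / b) * (1 / (b * N + c) - 1 / (b * (N+1) + c)) := by
      have e1 : b * ((N:ℝ) + 1) + c = b * N + b + c := by ring
      rw [e1, div_sub_div _ _ hbn.ne' hbn1.ne']
      have e2 : 1 * (b * N + b + c) - (b * N + c) * 1 = b := by ring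
      rw [e2]
      have e4 : 1 / b * (b / ((b * (N:ℝ) + c) * (b * N + b + c)))
          = 1 / ((b * (N:ℝ) + c) * (b * N + b + c)) := by
        field_simp
      rw [e4]
      exact div_le_div_of_nonneg_left one_pos.le (mul_pos hbn hbn1) (by nlinarith)
    have e3 : (1 / b) * (1 / c - 1 / (b * ↑(N+1) + c))
        = (1 / b) * (1 / c - 1 / (b * ↑N + c)) + (1 / b) * (1 / (b * ↑N + c) - 1 / (b * ↑(N+1) + c)) := by
      push_cast; ring
    rw [e3]
    push_cast
    push_cast at ih
    exact add_le_add ih key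

lemma sq_up {b c : ℝ} (hb : 0 < b) (hc : 0 < c) (N : ℕ) :
    ∑ k ∈ Finset.range N, 1 / (b * k + c) ^ 2 ≤ 1 / c ^ 2 + 1 / (b * c) := by
  cases N with
  | zero => simp; positivity
  | succ N =>
    rw [Finset.sum_range_succ']
    have h1 : ∑ k ∈ Finset.range N, 1 / (b * ↑(k + 1) + c) ^ 2 ≤ 1 / (b * c) := by
      have h2 := sq_aux hb hc N
      have h3 : (1 / b) * (1 / c - 1 / (b * N + c)) ≤ 1 / (b * c) := by
        have : 0 < b * N + c := by positivity
        have h4 : (0:ℝ) ≤ 1 / (b * N + c) := by positivity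
        calc (1 / b) * (1 / c - 1 / (b * N + c)) ≤ (1 / b) * (1 / c) := by
              apply mul_le_mul_of_nonneg_left _ (by positivity)
              linarith
          _ = 1 / (b * c) := by rw [div_mul_div_comm, one_mul]
        
      calc ∑ k ∈ Finset.range N, 1 / (b * ↑(k + 1) + c) ^ 2
          = ∑ k ∈ Finset.range N, 1 / (b * ((k:ℝ) + 1) + c) ^ 2 := by
            apply Finset.sum_congr rfl; intro i _; push_cast; ring_nf
        _ ≤ 1 / (b * c) := le_trans h2 h3
    have h5 : 1 / (b * (0:ℕ) + c) ^ 2 = 1 / c ^ 2 := by norm_num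
    rw [h5]
    linarith

section GGbounds
variable {b h : ℝ} {N : ℕ}

lemma GG_term_ge (hb : 0 < b) (hh : 0 < h) (k : ℕ) :
    (h / 2) / (b * k + 1 + h) ≤ psi (b * k + 1 + h) - psi (b * k + 1 + h / 2) := by
  have hz : (0:ℝ) < b * k + 1 + h / 2 := by positivity
  have hzy : b * (k:ℝ) + 1 + h / 2 ≤ b * k + 1 + h := by linarith
  have := psi_diff_ge hz hzy
  have e : b * (k:ℝ) + 1 + h - (b * k + 1 + h / 2) = h / 2 := by ring
  rw [e] at this
  exact this

lemma GG_term_le (hb : 0 < b) (hh : 0 < h) (k : ℕ) :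
    psi (b * k + 1 + h) - psi (b * k + 1 + h / 2)
      ≤ (h / 2) * (1 / (b * k + 1 + h / 2) + 1 / (b * k + 1 + h / 2) ^ 2) := by
  have hz : (0:ℝ) < b * k + 1 + h / 2 := by positivity
  have hzy : b * (k:ℝ) + 1 + h / 2 ≤ b * k + 1 + h := by linarith
  have := psi_diff_le hz hzy
  have e : b * (k:ℝ) + 1 + h - (b * k + 1 + h / 2) = h / 2 := by ring
  rw [e] at this
  exact this

lemma GG_lower_log (hb : 0 < b) (hh : 0 < h) :
    (h / (2 * b)) * (Real.log (b * N + 1 + h) - Real.log (1 + h)) ≤ GG b N h := by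
  have step1 : ∑ k ∈ Finset.range N, (h / 2) / (b * k + 1 + h) ≤ GG b N h := by
    apply Finset.sum_le_sum
    intro k _
    exact GG_term_ge hb hh k
  have step2 : (h / (2 * b)) * (Real.log (b * N + 1 + h) - Real.log (1 + h))
      ≤ ∑ k ∈ Finset.range N, (h / 2) / (b * k + 1 + h) := by
    have h1 := har_low hb (show (0:ℝ) < 1 + h by linarith) N
    have e : ∀ k : ℕ, (h / 2) / (b * k + 1 + h) = (h / 2) * (1 / (b * k + (1 + h))) := by
      intro k; rw [mul_one_div]; ring_nf
    calc (h / (2 * b)) * (Real.log (b * N + 1 + h) - Real.log (1 + h))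
        = (h / 2) * ((Real.log (b * N + (1 + h)) - Real.log (1 + h)) / b) := by
          rw [show b * (N:ℝ) + (1 + h) = b * N + 1 + h by ring]
          field_simp
          try ring
      _ ≤ (h / 2) * ∑ k ∈ Finset.range N, 1 / (b * k + (1 + h)) := by
          apply mul_le_mul_of_nonneg_left h1 (by positivity)
      _ = ∑ k ∈ Finset.range N, (h / 2) / (b * k + 1 + h) := by
          rw [Finset.mul_sum]
          apply Finset.sum_congr rfl
          intro k _
          rw [mul_one_div]; ring_nf
  linarith

lemma GG_lower_count (hb : 0 < b) (hh : 0 < h) :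
    (N : ℝ) * ((h / 2) / (b * N + 1 + h)) ≤ GG b N h := by
  have step1 : ∑ k ∈ Finset.range N, (h / 2) / (b * k + 1 + h) ≤ GG b N h :=
    Finset.sum_le_sum fun k _ => GG_term_ge hb hh k
  have step2 : (N : ℝ) * ((h / 2) / (b * N + 1 + h))
      ≤ ∑ k ∈ Finset.range N, (h / 2) / (b * k + 1 + h) := by
    calc (N : ℝ) * ((h / 2) / (b * N + 1 + h))
        = ∑ _k ∈ Finset.range N, (h / 2) / (b * N + 1 + h) := by
          rw [Finset.sum_const, Finset.card_range, nsmul_eq_mul]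
      _ ≤ ∑ k ∈ Finset.range N, (h / 2) / (b * k + 1 + h) := by
          apply Finset.sum_le_sum
          intro k hk
          have hk' : (k:ℝ) ≤ N := by
            have := Finset.mem_range.1 hk
            exact_mod_cast this.le
          have hle : b * (k:ℝ) + 1 + h ≤ b * N + 1 + h := by
            have := mul_le_mul_of_nonneg_left hk' hb.le
            linarith
          exact div_le_div_of_nonneg_left (by positivity) (by positivity) hle
  linarith

lemma GG_upper (hb : 0 < b) (hh : 0 < h) :
    GG b N h ≤ (h / 2) * ((1 + b) / b) * (Real.log (b * N + 1 + h / 2) - Real.log (1 + h / 2))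
      + (1 + 1 / b) := by
  set c : ℝ := 1 + h / 2 with hc
  have hc0 : 0 < c := by positivity
  have hc1 : 1 ≤ c := by rw [hc]; linarith
  have step1 : GG b N h ≤ ∑ k ∈ Finset.range N,
      (h / 2) * (1 / (b * k + c) + 1 / (b * k + c) ^ 2) := by
    apply Finset.sum_le_sum
    intro k _
    rw [show b * (k:ℝ) + c = b * k + 1 + h / 2 from by rw [hc]; ring]
    exact GG_term_le hb hh k
  have split : ∑ k ∈ Finset.range N, (h / 2) * (1 / (b * k + c) + 1 / (b * k + c) ^ 2)
      = (h / 2) * (∑ k ∈ Finset.range N, 1 / (b * k + c))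
        + (h / 2) * (∑ k ∈ Finset.range N, 1 / (b * k + c) ^ 2) := by
    rw [Finset.mul_sum, Finset.mul_sum, ← Finset.sum_add_distrib]
    apply Finset.sum_congr rfl
    intro k _; ring
  have part1 : (h / 2) * (∑ k ∈ Finset.range N, 1 / (b * k + c))
      ≤ (h / 2) * ((1 + b) / b) * (Real.log (b * N + c) - Real.log c) := by
    have h1 := har_up hb hc0 N
    have hlog : 0 ≤ Real.log (b * N + c) - Real.log c := by
      have h0 : c ≤ b * N + c := by
        have : (0:ℝ) ≤ b * N := by positivity
        linarith
      have := Real.log_le_log hc0 h0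
      linarith
    have hcoef : (c + b) / (c * b) ≤ (1 + b) / b := by
      rw [div_le_div_iff₀ (by positivity) hb]
      nlinarith [mul_le_mul_of_nonneg_left hc1 (mul_pos hb hb).le]
    calc (h / 2) * (∑ k ∈ Finset.range N, 1 / (b * k + c))
        ≤ (h / 2) * (((c + b) / (c * b)) * (Real.log (b * N + c) - Real.log c)) := by
          apply mul_le_mul_of_nonneg_left h1 (by positivity)
      _ ≤ (h / 2) * (((1 + b) / b) * (Real.log (b * N + c) - Real.log c)) := by
          apply mul_le_mul_of_nonneg_left _ (by positivity)
          exact mul_le_mul_of_nonneg_right hcoef hlog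
      _ = (h / 2) * ((1 + b) / b) * (Real.log (b * N + c) - Real.log c) := by ring
  have part2 : (h / 2) * (∑ k ∈ Finset.range N, 1 / (b * k + c) ^ 2) ≤ 1 + 1 / b := by
    have h1 := sq_up hb hc0 N
    have h2 : (h / 2) * (∑ k ∈ Finset.range N, 1 / (b * k + c) ^ 2)
        ≤ (h / 2) * (1 / c ^ 2 + 1 / (b * c)) := by
      apply mul_le_mul_of_nonneg_left h1 (by positivity)
    have h3 : (h / 2) * (1 / c ^ 2 + 1 / (b * c)) ≤ 1 + 1 / b := by
      have hhc : h / 2 ≤ c := by rw [hc]; linarith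
      have t1 : (h / 2) * (1 / c ^ 2) ≤ 1 := by
        rw [mul_one_div, div_le_one (by positivity)]
        nlinarith
      have t2 : (h / 2) * (1 / (b * c)) ≤ 1 / b := by
        rw [mul_one_div, div_le_div_iff₀ (by positivity) hb]
        nlinarith
      calc (h / 2) * (1 / c ^ 2 + 1 / (b * c))
          = (h / 2) * (1 / c ^ 2) + (h / 2) * (1 / (b * c)) := by ring
        _ ≤ 1 + 1 / b := add_le_add t1 t2
    linarith
  have e : b * (N:ℝ) + c = b * N + 1 + h / 2 := by rw [hc]; ring
  rw [e] at part1
  calc GG b N h ≤ (h / 2) * (∑ k ∈ Finset.range N, 1 / (b * k + c))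
        + (h / 2) * (∑ k ∈ Finset.range N, 1 / (b * k + c) ^ 2) := by rw [← split]; exact step1
    _ ≤ (h / 2) * ((1 + b) / b) * (Real.log (b * N + 1 + h / 2) - Real.log (1 + h / 2))
        + (1 + 1 / b) := by
        have : Real.log c = Real.log (1 + h / 2) := by rw [hc]
        rw [← this]
        exact add_le_add part1 part2

end GGbounds

section GG2bounds
variable {b h : ℝ} {N : ℕ}

lemma GG'_term_le (hb : 0 < b) (hh : 0 < h) (k : ℕ) :
    psi1 (b * k + 1 + h) - psi1 (b * k + 1 + h / 2) / 2
      ≤ 1 / (b * k + 1 + h) + 1 / (b * k + 1 + h) ^ 2 := by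
  have hx : (0:ℝ) < b * k + 1 + h := by positivity
  have hz : (0:ℝ) < b * k + 1 + h / 2 := by positivity
  have h1 := psi1_le hx
  have h2 := (psi1_pos hz).le
  linarith

lemma GG'_term_ge (hb : 0 < b) (hh : 0 < h) (k : ℕ) :
    1 / (b * k + 1 + h) - 1 / (2 * (b * k + 1) + h) - (1 / 2) * (1 / (b * k + 1) ^ 2)
      ≤ psi1 (b * k + 1 + h) - psi1 (b * k + 1 + h / 2) / 2 := by
  have hx : (0:ℝ) < b * k + 1 := by positivity
  have hxh : (0:ℝ) < b * k + 1 + h := by positivity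
  have hz : (0:ℝ) < b * k + 1 + h / 2 := by positivity
  have h1 := le_psi1 hxh
  have h2 := psi1_le hz
  have e1 : (1 / 2) * (1 / (b * (k:ℝ) + 1 + h / 2)) = 1 / (2 * (b * k + 1) + h) := by
    rw [show (2:ℝ) * (b * k + 1) + h = 2 * (b * k + 1 + h / 2) by ring]
    field_simp
  have e2 : (1 / 2) * (1 / (b * (k:ℝ) + 1 + h / 2) ^ 2) ≤ (1 / 2) * (1 / (b * k + 1) ^ 2) := by
    apply mul_le_mul_of_nonneg_left _ (by norm_num)
    apply div_le_div_of_nonneg_left one_pos.le (pow_pos hx 2)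
    nlinarith
  have h3 : psi1 (b * k + 1 + h / 2) / 2
      ≤ 1 / (2 * (b * k + 1) + h) + (1 / 2) * (1 / (b * k + 1) ^ 2) := by
    have := mul_le_mul_of_nonneg_left h2 (by norm_num : (0:ℝ) ≤ 1/2)
    calc psi1 (b * k + 1 + h / 2) / 2
        = (1/2) * psi1 (b * k + 1 + h / 2) := by ring
      _ ≤ (1/2) * (1 / (b * k + 1 + h / 2) + 1 / (b * k + 1 + h / 2) ^ 2) := this
      _ = (1/2) * (1 / (b * (k:ℝ) + 1 + h / 2)) + (1/2) * (1 / (b * (k:ℝ) + 1 + h / 2) ^ 2) := by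
          ring
      _ ≤ 1 / (2 * (b * k + 1) + h) + (1 / 2) * (1 / (b * k + 1) ^ 2) := by
          rw [← e1]
          exact add_le_add le_rfl e2
  linarith

lemma GG'_upper (hb : 0 < b) (hh : 0 < h) :
    GG' b N h ≤ ((1 + b) / b) * (Real.log (b * N + 1 + h) - Real.log (1 + h)) + (1 + 1 / b) := by
  set c : ℝ := 1 + h with hc
  have hc0 : 0 < c := by positivity
  have hc1 : 1 ≤ c := by rw [hc]; linarith
  have step1 : GG' b N h ≤ ∑ k ∈ Finset.range N, (1 / (b * k + c) + 1 / (b * k + c) ^ 2) := by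
    apply Finset.sum_le_sum
    intro k _
    rw [show b * (k:ℝ) + c = b * k + 1 + h from by rw [hc]; ring]
    exact GG'_term_le hb hh k
  rw [Finset.sum_add_distrib] at step1
  have part1 : ∑ k ∈ Finset.range N, 1 / (b * k + c)
      ≤ ((1 + b) / b) * (Real.log (b * N + c) - Real.log c) := by
    have h1 := har_up hb hc0 N
    have hlog : 0 ≤ Real.log (b * N + c) - Real.log c := by
      have h0 : c ≤ b * N + c := by
        have : (0:ℝ) ≤ b * N := by positivity
        linarith
      have := Real.log_le_log hc0 h0
      linarith
    have hcoef : (c + b) / (c * b) ≤ (1 + b) / b := by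
      rw [div_le_div_iff₀ (by positivity) hb]
      nlinarith [mul_le_mul_of_nonneg_left hc1 (mul_pos hb hb).le]
    calc ∑ k ∈ Finset.range N, 1 / (b * k + c)
        ≤ ((c + b) / (c * b)) * (Real.log (b * N + c) - Real.log c) := h1
      _ ≤ ((1 + b) / b) * (Real.log (b * N + c) - Real.log c) :=
          mul_le_mul_of_nonneg_right hcoef hlog
  have part2 : ∑ k ∈ Finset.range N, 1 / (b * k + c) ^ 2 ≤ 1 + 1 / b := by
    have h1 := sq_up hb hc0 N
    have t1 : 1 / c ^ 2 ≤ 1 := by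
      rw [div_le_one (by positivity)]
      nlinarith
    have t2 : 1 / (b * c) ≤ 1 / b := by
      apply div_le_div_of_nonneg_left one_pos.le hb
      nlinarith
    linarith
  have e : b * (N:ℝ) + c = b * N + 1 + h := by rw [hc]; ring
  have e2 : Real.log c = Real.log (1 + h) := by rw [hc]
  rw [e, e2] at part1
  linarith

lemma GG'_lower (hb : 0 < b) (hh : 0 < h) :
    (1 / (6 * b)) * (Real.log (b * N + 1) - Real.log (h + b + 1)) - (1 / 2) * (1 + 1 / b)
      ≤ GG' b N h := by
  have hq_nonneg : ∀ k : ℕ, 0 ≤ 1 / (b * (k:ℝ) + 1 + h) - 1 / (2 * (b * k + 1) + h) := by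
    intro k
    have hx : (0:ℝ) < b * k + 1 := by positivity
    have h1 : (0:ℝ) < b * k + 1 + h := by positivity
    have : 1 / (2 * (b * (k:ℝ) + 1) + h) ≤ 1 / (b * k + 1 + h) :=
      div_le_div_of_nonneg_left one_pos.le h1 (by linarith)
    linarith
  have hmain : GG' b N h ≥ (∑ k ∈ Finset.range N, (1 / (b * (k:ℝ) + 1 + h) - 1 / (2 * (b * k + 1) + h)))
      - (1 / 2) * ∑ k ∈ Finset.range N, 1 / (b * (k:ℝ) + 1) ^ 2 := by
    rw [ge_iff_le, Finset.mul_sum, ← Finset.sum_sub_distrib]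
    unfold GG'
    apply Finset.sum_le_sum
    intro k _
    linarith [GG'_term_ge hb hh k]
  have hsq : (1 / 2) * ∑ k ∈ Finset.range N, 1 / (b * (k:ℝ) + 1) ^ 2
      ≤ (1 / 2) * (1 + 1 / b) := by
    apply mul_le_mul_of_nonneg_left _ (by norm_num)
    have := sq_up hb one_pos N
    simpa using this
  have hQ : (1 / (6 * b)) * (Real.log (b * N + 1) - Real.log (h + b + 1))
      ≤ ∑ k ∈ Finset.range N, (1 / (b * (k:ℝ) + 1 + h) - 1 / (2 * (b * k + 1) + h)) := by
    set k₁ : ℕ := ⌈h / b⌉₊ with hk₁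
    have hhb : 0 ≤ h / b := by positivity
    have hk₁h : h ≤ b * k₁ := by
      have h0 := Nat.le_ceil (h / b)
      have h1 : b * (h / b) ≤ b * (k₁:ℝ) := mul_le_mul_of_nonneg_left h0 hb.le
      have e : b * (h / b) = h := by field_simp
      linarith
    have hk₁h2 : b * (k₁:ℝ) + 1 ≤ h + b + 1 := by
      have h0 : (k₁:ℝ) < h / b + 1 := Nat.ceil_lt_add_one hhb
      have h1 : b * (k₁:ℝ) < b * (h / b + 1) := mul_lt_mul_of_pos_left h0 hb
      have e : b * (h / b + 1) = h + b := by field_simp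
      linarith
    by_cases hcase : N ≤ k₁
    · have hNk : (N:ℝ) ≤ k₁ := by exact_mod_cast hcase
      have hlog : Real.log (b * N + 1) ≤ Real.log (h + b + 1) := by
        apply Real.log_le_log (by positivity)
        have := mul_le_mul_of_nonneg_left hNk hb.le
        linarith
      have hle0 : (1 / (6 * b)) * (Real.log (b * N + 1) - Real.log (h + b + 1)) ≤ 0 :=
        mul_nonpos_of_nonneg_of_nonpos (by positivity) (by linarith)
      exact le_trans hle0 (Finset.sum_nonneg fun k _ => hq_nonneg k)
    · push_neg at hcase
      have hsub : Finset.Ico k₁ N ⊆ Finset.range N := by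
        intro x hx
        rw [Finset.mem_range]
        exact (Finset.mem_Ico.1 hx).2
      have s1 : ∑ k ∈ Finset.Ico k₁ N, (1 / (b * (k:ℝ) + 1 + h) - 1 / (2 * (b * k + 1) + h))
          ≤ ∑ k ∈ Finset.range N, (1 / (b * (k:ℝ) + 1 + h) - 1 / (2 * (b * k + 1) + h)) :=
        Finset.sum_le_sum_of_subset_of_nonneg hsub fun i _ _ => hq_nonneg i
      have s2 : ∑ k ∈ Finset.Ico k₁ N, (1/6 : ℝ) * (1 / (b * (k:ℝ) + 1))
          ≤ ∑ k ∈ Finset.Ico k₁ N, (1 / (b * (k:ℝ) + 1 + h) - 1 / (2 * (b * k + 1) + h)) := by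
        apply Finset.sum_le_sum
        intro k hk
        have hk' : k₁ ≤ k := (Finset.mem_Ico.1 hk).1
        have hkk : (k₁:ℝ) ≤ k := by exact_mod_cast hk'
        have hhx : h ≤ b * (k:ℝ) := le_trans hk₁h (mul_le_mul_of_nonneg_left hkk hb.le)
        have hx : (0:ℝ) < b * k + 1 := by positivity
        have hxh : (0:ℝ) < b * k + 1 + h := by positivity
        have h2xh : (0:ℝ) < 2 * (b * (k:ℝ) + 1) + h := by positivity
        rw [div_sub_div _ _ hxh.ne' h2xh.ne']
        have e : 1 * (2 * (b * (k:ℝ) + 1) + h) - (b * k + 1 + h) * 1 = b * k + 1 := by ring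
        rw [e]
        have e2 : (1/6 : ℝ) * (1 / (b * (k:ℝ) + 1)) = 1 / (6 * (b * k + 1)) := by
          field_simp
        rw [e2, div_le_div_iff₀ (by positivity) (mul_pos hxh h2xh)]
        nlinarith [hx, hhx, hh.le]
      have s3 : ∑ k ∈ Finset.Ico k₁ N, (1/6 : ℝ) * (1 / (b * (k:ℝ) + 1))
          = (1/6 : ℝ) * ∑ j ∈ Finset.range (N - k₁), 1 / (b * (j:ℝ) + (b * k₁ + 1)) := by
        rw [← Finset.mul_sum, Finset.sum_Ico_eq_sum_range]
        congr 1
        apply Finset.sum_congr rfl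
        intro j _
        congr 1
        push_cast
        ring
      have s4 := har_low hb (show (0:ℝ) < b * k₁ + 1 by positivity) (N - k₁)
      have e5 : b * ((N - k₁ : ℕ) : ℝ) + (b * k₁ + 1) = b * N + 1 := by
        rw [Nat.cast_sub hcase.le]
        ring
      rw [e5] at s4
      have s6 : Real.log (b * (k₁:ℝ) + 1) ≤ Real.log (h + b + 1) :=
        Real.log_le_log (by positivity) hk₁h2
      calc (1 / (6 * b)) * (Real.log (b * N + 1) - Real.log (h + b + 1))
          ≤ (1 / (6 * b)) * (Real.log (b * N + 1) - Real.log (b * (k₁:ℝ) + 1)) := by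
            apply mul_le_mul_of_nonneg_left _ (by positivity)
            linarith
        _ = (1/6 : ℝ) * ((Real.log (b * N + 1) - Real.log (b * (k₁:ℝ) + 1)) / b) := by
            field_simp
        _ ≤ (1/6 : ℝ) * ∑ j ∈ Finset.range (N - k₁), 1 / (b * (j:ℝ) + (b * k₁ + 1)) :=
            mul_le_mul_of_nonneg_left s4 (by norm_num)
        _ = ∑ k ∈ Finset.Ico k₁ N, (1/6 : ℝ) * (1 / (b * (k:ℝ) + 1)) := s3.symm
        _ ≤ ∑ k ∈ Finset.range N, (1 / (b * (k:ℝ) + 1 + h) - 1 / (2 * (b * k + 1) + h)) :=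
            le_trans s2 s1
  linarith [hmain, hsq, hQ]

end GG2bounds

section Misc

lemma log_le_two_sqrt {y : ℝ} (hy : 0 < y) : Real.log y ≤ 2 * Real.sqrt y := by
  have h1 : Real.log y = 2 * Real.log (Real.sqrt y) := by rw [Real.log_sqrt hy.le]; ring
  have h2 : Real.log (Real.sqrt y) ≤ Real.sqrt y - 1 :=
    Real.log_le_sub_one_of_pos (Real.sqrt_pos.2 hy)
  nlinarith [Real.sqrt_nonneg y]

lemma sqrt_one_add_le {u : ℝ} (hu : 0 ≤ u) : Real.sqrt (1 + u) ≤ 1 + Real.sqrt u := by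
  have h : (1:ℝ) + u ≤ (1 + Real.sqrt u) ^ 2 := by
    nlinarith [Real.sq_sqrt hu, Real.sqrt_nonneg u]
  calc Real.sqrt (1 + u) ≤ Real.sqrt ((1 + Real.sqrt u) ^ 2) := Real.sqrt_le_sqrt h
    _ = 1 + Real.sqrt u := Real.sqrt_sq (by positivity)

lemma mul_sqrt_div {x y : ℝ} (hx : 0 ≤ x) (hy : 0 ≤ y) :
    x * Real.sqrt (y / x) = Real.sqrt (x * y) := by
  rw [Real.sqrt_div hy x, Real.sqrt_mul hx y]
  rw [show x * (Real.sqrt y / Real.sqrt x) = x / Real.sqrt x * Real.sqrt y from by ring,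
    Real.div_sqrt]

lemma sqrt_div_eq {h : ℝ} {N : ℕ} (hh : 0 < h) (hN0 : (0:ℝ) < N) :
    Real.sqrt (h / N) = Real.sqrt (h * N) / N := by
  rw [show h / (N:ℝ) = (h * N) / (N:ℝ)^2 from by field_simp]
  rw [Real.sqrt_div (by positivity) _, Real.sqrt_sq hN0.le]

lemma tendsto_sqrt_nat : Tendsto (fun N : ℕ => Real.sqrt N) atTop atTop := by
  apply tendsto_atTop_atTop.2
  intro bd
  refine ⟨(⌈bd⌉₊) ^ 2, fun x hx => ?_⟩
  have hx' : ((⌈bd⌉₊ : ℝ)) ^ 2 ≤ (x:ℝ) := by exact_mod_cast hx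
  calc bd ≤ (⌈bd⌉₊ : ℝ) := Nat.le_ceil bd
    _ = Real.sqrt (((⌈bd⌉₊ : ℝ)) ^ 2) := (Real.sqrt_sq (Nat.cast_nonneg _)).symm
    _ ≤ Real.sqrt x := Real.sqrt_le_sqrt hx'

lemma tendsto_log_div_sqrt :
    Tendsto (fun N : ℕ => Real.log N / Real.sqrt N) atTop (nhds 0) := by
  have base : Tendsto (fun y : ℝ => 2 * (Real.log y / y)) atTop (nhds 0) := by
    have h0 := Real.isLittleO_log_id_atTop.tendsto_div_nhds_zero
    have h1 := h0.const_mul (2:ℝ)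
    simpa using h1
  have comp := base.comp tendsto_sqrt_nat
  apply comp.congr'
  filter_upwards [eventually_ge_atTop 1] with N hN1
  have hN0 : (0:ℝ) ≤ N := Nat.cast_nonneg N
  show 2 * (Real.log (Real.sqrt N) / Real.sqrt N) = Real.log N / Real.sqrt N
  rw [Real.log_sqrt hN0]
  ring

lemma ev_log_le_sqrt (C : ℝ) : ∀ᶠ N : ℕ in atTop, C * Real.log N ≤ Real.sqrt N := by
  rcases le_or_gt C 0 with hC | hC
  · filter_upwards [eventually_ge_atTop 1] with N hN1
    have h1 : 0 ≤ Real.log N := Real.log_nonneg (by exact_mod_cast hN1)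
    nlinarith [Real.sqrt_nonneg ((N:ℕ):ℝ)]
  · filter_upwards [Metric.tendsto_nhds.1 tendsto_log_div_sqrt (1/C) (by positivity),
      eventually_ge_atTop 1] with N h1 hN1
    rw [Real.dist_eq, sub_zero] at h1
    have hN1' : (1:ℝ) ≤ N := by exact_mod_cast hN1
    have hs : 0 < Real.sqrt N := Real.sqrt_pos.2 (by linarith)
    have hlog : 0 ≤ Real.log N := Real.log_nonneg hN1'
    have h2 : Real.log N / Real.sqrt N < 1 / C := lt_of_abs_lt h1
    rw [div_lt_div_iff₀ hs hC] at h2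
    nlinarith

end Misc

section Pointwise
variable {b h ε : ℝ} {N : ℕ}

lemma VU_bound (hb : 0 < b) (hh : 0 < h) (hN0 : (0:ℝ) < N) (hε : 0 < ε)
    (hup : ε * N ≤ h) :
    GG' b N h ≤ ((1 + b) / b) * Real.log (b / ε + 1) + (1 + 1 / b) := by
  have h1 := GG'_upper (N := N) hb hh
  have hlog : Real.log (b * N + 1 + h) - Real.log (1 + h) ≤ Real.log (b / ε + 1) := by
    have e1 : Real.log (b * N + 1 + h) - Real.log (1 + h)
        = Real.log ((b * N + 1 + h) / (1 + h)) := by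
      rw [Real.log_div (by positivity) (by positivity)]
    rw [e1]
    apply Real.log_le_log (by positivity)
    rw [div_le_iff₀ (by positivity)]
    have h2 : ε * (b * N) ≤ b * h := by nlinarith
    have h3 : b * (N:ℝ) ≤ b / ε * h := by
      rw [div_mul_eq_mul_div, le_div_iff₀ hε]
      linarith
    nlinarith [h3, div_nonneg hb.le hε.le, hh.le]
  have hcoef : (0:ℝ) ≤ (1 + b) / b := by positivity
  nlinarith [mul_le_mul_of_nonneg_left hlog hcoef]

lemma T_pointwise (hb : 0 < b) (hh : 0 < h) (hN : (1:ℝ) ≤ N) (hε : 0 < ε)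
    (hhN : ε * N ≤ h) :
    ε / (2 * (b + 1 + ε)) ≤ GG b N h / N := by
  have hN0 : (0:ℝ) < N := by linarith
  have h1 := GG_lower_count (N := N) hb hh
  have m1 : (ε * N / 2) / (b * N + 1 + ε * N) ≤ (h / 2) / (b * N + 1 + h) := by
    rw [div_le_div_iff₀ (by positivity) (by positivity)]
    nlinarith [mul_le_mul_of_nonneg_left hhN (by positivity : (0:ℝ) ≤ b * N + 1)]
  have m2 : ε / (2 * (b + 1 + ε)) ≤ (ε * N / 2) / (b * N + 1 + ε * N) := by
    rw [div_le_div_iff₀ (by positivity) (by positivity)]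
    nlinarith [mul_le_mul_of_nonneg_left hN (by positivity : (0:ℝ) ≤ ε), hε.le, hb.le]
  rw [le_div_iff₀ hN0]
  calc ε / (2 * (b + 1 + ε)) * N ≤ ((h / 2) / (b * N + 1 + h)) * N :=
        mul_le_mul_of_nonneg_right (m2.trans m1) hN0.le
    _ = (N:ℝ) * ((h / 2) / (b * N + 1 + h)) := by ring
    _ ≤ GG b N h := h1

lemma AU_div_bound (hb : 0 < b) (hh : 0 < h) (hN : (1:ℝ) ≤ N) :
    GG b N h / N ≤ ((1 + b) / b) * (h / N)
      + (((1 + b) / b) * Real.sqrt (2 * b)) * Real.sqrt (h / N) + (1 + 1 / b) * (1 / N) := by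
  have hN0 : (0:ℝ) < N := by linarith
  have hGU := GG_upper (N := N) hb hh
  have hlogd : Real.log (b * N + 1 + h / 2) - Real.log (1 + h / 2)
      ≤ 2 + 2 * Real.sqrt (2 * b) * Real.sqrt ((N:ℝ) / h) := by
    have hr1 : (b * N + 1 + h / 2) / (1 + h / 2) ≤ 1 + 2 * b * N / h := by
      rw [div_le_iff₀ (by positivity)]
      have e : (1 + 2 * b * (N:ℝ) / h) * (1 + h / 2)
          = 1 + h / 2 + 2 * b * N / h + b * N := by field_simp; ring
      rw [e]
      have h0 : (0:ℝ) ≤ 2 * b * N / h := by positivity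
      linarith
    have hl1 : Real.log (b * N + 1 + h / 2) - Real.log (1 + h / 2)
        = Real.log ((b * N + 1 + h / 2) / (1 + h / 2)) := by
      rw [Real.log_div (by positivity) (by positivity)]
    have hl2 : Real.log ((b * N + 1 + h / 2) / (1 + h / 2)) ≤ Real.log (1 + 2 * b * N / h) :=
      Real.log_le_log (by positivity) hr1
    have hl3 : Real.log (1 + 2 * b * N / h) ≤ 2 * Real.sqrt (1 + 2 * b * N / h) :=
      log_le_two_sqrt (by positivity)
    have hl4 : Real.sqrt (1 + 2 * b * N / h) ≤ 1 + Real.sqrt (2 * b * N / h) :=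
      sqrt_one_add_le (by positivity)
    have e2 : 2 * b * (N:ℝ) / h = 2 * b * ((N:ℝ) / h) := by ring
    have hl5 : Real.sqrt (2 * b * ((N:ℝ) / h)) = Real.sqrt (2 * b) * Real.sqrt ((N:ℝ) / h) :=
      Real.sqrt_mul (by positivity) _
    rw [hl1]
    calc Real.log ((b * N + 1 + h / 2) / (1 + h / 2))
        ≤ 2 * Real.sqrt (1 + 2 * b * N / h) := le_trans hl2 hl3
      _ ≤ 2 * (1 + Real.sqrt (2 * b * N / h)) := by linarith
      _ = 2 + 2 * Real.sqrt (2 * b) * Real.sqrt ((N:ℝ) / h) := by rw [e2, hl5]; ring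
  have key : GG b N h ≤ ((1 + b) / b) * h
      + ((1 + b) / b) * Real.sqrt (2 * b) * (h * Real.sqrt ((N:ℝ) / h)) + (1 + 1 / b) := by
    have hcoef : (0:ℝ) ≤ h / 2 * ((1 + b) / b) := by positivity
    have h2 := mul_le_mul_of_nonneg_left hlogd hcoef
    calc GG b N h ≤ h / 2 * ((1 + b) / b)
          * (Real.log (b * N + 1 + h / 2) - Real.log (1 + h / 2)) + (1 + 1 / b) := hGU
      _ ≤ h / 2 * ((1 + b) / b) * (2 + 2 * Real.sqrt (2 * b) * Real.sqrt ((N:ℝ) / h))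
          + (1 + 1 / b) := by
          have e : h / 2 * ((1 + b) / b)
              * (Real.log (b * N + 1 + h / 2) - Real.log (1 + h / 2))
              = h / 2 * ((1 + b) / b) * (Real.log (b * N + 1 + h / 2) - Real.log (1 + h / 2)) := rfl
          linarith [h2]
      _ = ((1 + b) / b) * h + ((1 + b) / b) * Real.sqrt (2 * b) * (h * Real.sqrt ((N:ℝ) / h))
          + (1 + 1 / b) := by ring
  have e3 : h * Real.sqrt ((N:ℝ) / h) = Real.sqrt (h * N) := mul_sqrt_div hh.le (Nat.cast_nonneg N)
  have e4 : Real.sqrt (h * N) / N = Real.sqrt (h / N) := (sqrt_div_eq hh hN0).symm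
  rw [e3] at key
  calc GG b N h / N ≤ (((1 + b) / b) * h
      + ((1 + b) / b) * Real.sqrt (2 * b) * Real.sqrt (h * N) + (1 + 1 / b)) / N := by
        gcongr
    _ = ((1 + b) / b) * (h / N)
      + (((1 + b) / b) * Real.sqrt (2 * b)) * (Real.sqrt (h * N) / N) + (1 + 1 / b) * (1 / N) := by
        field_simp
    _ = ((1 + b) / b) * (h / N)
      + (((1 + b) / b) * Real.sqrt (2 * b)) * Real.sqrt (h / N) + (1 + 1 / b) * (1 / N) := by
        rw [e4]

lemma S_pointwise (hb : 0 < b) {c : ℝ} (hc : 0 < c) (hh : 0 < h) (hch : c ≤ h)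
    (hhN : h ≤ N) (hN2 : 2 ≤ N)
    (hE4 : 2 * (b + 2) * Real.log N ≤ Real.sqrt N)
    (hE5 : 0 ≤ Real.log (b / 2) + (1 / 4) * Real.log N) :
    min 1 (c / (8 * b)) ≤ GG b N h / Real.log N := by
  have hN2' : (2:ℝ) ≤ N := by exact_mod_cast hN2
  have hN0 : (0:ℝ) < N := by linarith
  have hN1 : (1:ℝ) < N := by linarith
  have hlogN : 0 < Real.log N := Real.log_pos hN1
  have hsN : 0 < Real.sqrt N := Real.sqrt_pos.2 hN0
  have hsle : Real.sqrt N ≤ N := by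
    calc Real.sqrt N ≤ Real.sqrt ((N:ℝ) ^ 2) := Real.sqrt_le_sqrt (by nlinarith)
      _ = N := Real.sqrt_sq hN0.le
  rcases le_total h (Real.sqrt N) with hcase | hcase
  · have hlow := GG_lower_log (N := N) hb hh
    have hd : Real.log (b / 2) + (1 / 2) * Real.log N
        ≤ Real.log (b * N + 1 + h) - Real.log (1 + h) := by
      have hs1 : (1:ℝ) ≤ Real.sqrt N := by
        rw [show (1:ℝ) = Real.sqrt 1 from (Real.sqrt_one).symm]
        exact Real.sqrt_le_sqrt (by linarith)
      have h1 : 1 + h ≤ 2 * Real.sqrt N := by linarith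
      have h2 : (b / 2) * Real.sqrt N * (1 + h) ≤ (b / 2) * Real.sqrt N * (2 * Real.sqrt N) :=
        mul_le_mul_of_nonneg_left h1 (by positivity)
      have h3 : (b / 2) * Real.sqrt N * (2 * Real.sqrt N) = b * N := by
        have e : (b / 2) * Real.sqrt N * (2 * Real.sqrt N)
            = b * (Real.sqrt N * Real.sqrt N) := by ring
        rw [e, Real.mul_self_sqrt hN0.le]
      have hr : (b / 2) * Real.sqrt N * (1 + h) ≤ b * N + 1 + h := by
        rw [h3] at h2
        linarith
      have hlog1 : Real.log ((b / 2) * Real.sqrt N) ≤ Real.log ((b * N + 1 + h) / (1 + h)) := by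
        apply Real.log_le_log (by positivity)
        rw [le_div_iff₀ (by positivity)]
        exact hr
      have e1 : Real.log ((b / 2) * Real.sqrt N) = Real.log (b / 2) + (1 / 2) * Real.log N := by
        rw [Real.log_mul (by positivity) hsN.ne', Real.log_sqrt hN0.le]
        ring
      have e2 : Real.log ((b * N + 1 + h) / (1 + h))
          = Real.log (b * N + 1 + h) - Real.log (1 + h) :=
        Real.log_div (by positivity) (by positivity)
      rw [e1, e2] at hlog1
      exact hlog1
    have hd2 : (1 / 4) * Real.log N ≤ Real.log (b * N + 1 + h) - Real.log (1 + h) := by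
      have e : Real.log (b / 2) + (1 / 2) * Real.log N
          = (Real.log (b / 2) + (1 / 4) * Real.log N) + (1 / 4) * Real.log N := by ring
      rw [e] at hd
      linarith
    have key : (c / (8 * b)) * Real.log N ≤ GG b N h := by
      calc (c / (8 * b)) * Real.log N = (c / (2 * b)) * ((1 / 4) * Real.log N) := by ring
        _ ≤ (h / (2 * b)) * ((1 / 4) * Real.log N) := by
            apply mul_le_mul_of_nonneg_right _ (by positivity)
            gcongr
        _ ≤ (h / (2 * b)) * (Real.log (b * N + 1 + h) - Real.log (1 + h)) :=
            mul_le_mul_of_nonneg_left hd2 (by positivity)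
        _ ≤ GG b N h := hlow
    calc min 1 (c / (8 * b)) ≤ c / (8 * b) := min_le_right _ _
      _ ≤ GG b N h / Real.log N := by
          rw [le_div_iff₀ hlogN]
          linarith
  · have hlow := GG_lower_count (N := N) hb hh
    have key : Real.log N ≤ GG b N h := by
      have c1 : (Real.sqrt N / 2) / (b * N + 1 + Real.sqrt N) ≤ (h / 2) / (b * N + 1 + h) := by
        rw [div_le_div_iff₀ (by positivity) (by positivity)]
        nlinarith [mul_le_mul_of_nonneg_left hcase (by positivity : (0:ℝ) ≤ b * N + 1)]
      have c2 : b * N + 1 + Real.sqrt N ≤ (b + 2) * N := by nlinarith [hsle, hN2']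
      have c3 : (Real.sqrt N / 2) / ((b + 2) * N) ≤ (Real.sqrt N / 2) / (b * N + 1 + Real.sqrt N) :=
        div_le_div_of_nonneg_left (by positivity) (by positivity) c2
      have c4 : Real.log N ≤ (N : ℝ) * ((Real.sqrt N / 2) / ((b + 2) * N)) := by
        have e : (N : ℝ) * ((Real.sqrt N / 2) / ((b + 2) * N)) = Real.sqrt N / (2 * (b + 2)) := by
          field_simp
        rw [e, le_div_iff₀ (by positivity)]
        linarith [hE4]
      calc Real.log N ≤ (N : ℝ) * ((Real.sqrt N / 2) / ((b + 2) * N)) := c4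
        _ ≤ (N : ℝ) * ((Real.sqrt N / 2) / (b * N + 1 + Real.sqrt N)) :=
            mul_le_mul_of_nonneg_left c3 hN0.le
        _ ≤ (N : ℝ) * ((h / 2) / (b * N + 1 + h)) := mul_le_mul_of_nonneg_left c1 hN0.le
        _ ≤ GG b N h := hlow
    calc min 1 (c / (8 * b)) ≤ 1 := min_le_left _ _
      _ ≤ GG b N h / Real.log N := by
          rw [le_div_iff₀ hlogN]
          linarith

lemma P_pointwise (hb : 0 < b) {c₀ : ℝ} (hc₀ : 0 < c₀) (hh : 0 < h)
    (hS : c₀ * Real.log N ≤ GG b N h) (hN2 : 2 ≤ N) (hNb : b + 2 ≤ (N:ℝ))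
    (hsmall : (1 + 1 / b) ≤ (c₀ / 2) * Real.log N) :
    min 1 (c₀ * b / (2 * (1 + b))) ≤ h := by
  rcases le_total 1 h with h1 | h1
  · exact le_trans (min_le_left _ _) h1
  · have hN2' : (2:ℝ) ≤ N := by exact_mod_cast hN2
    have hN0 : (0:ℝ) < N := by linarith
    have hN1 : (1:ℝ) < N := by linarith
    have hlogN : 0 < Real.log N := Real.log_pos hN1
    have hGU := GG_upper (N := N) hb hh
    have hlog2 : Real.log (b * N + 1 + h / 2) ≤ 2 * Real.log N := by
      have hr : b * N + 1 + h / 2 ≤ (N:ℝ) * N := by nlinarith [mul_le_mul_of_nonneg_right hNb hN0.le, hN1.le]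
      calc Real.log (b * N + 1 + h / 2) ≤ Real.log ((N:ℝ) * N) :=
            Real.log_le_log (by positivity) hr
        _ = 2 * Real.log N := by rw [Real.log_mul hN0.ne' hN0.ne']; ring
    have hdrop : Real.log (b * N + 1 + h / 2) - Real.log (1 + h / 2) ≤ 2 * Real.log N := by
      have h0 : 0 ≤ Real.log (1 + h / 2) := Real.log_nonneg (by linarith)
      linarith
    have step : c₀ * Real.log N ≤ h * ((1 + b) / b) * Real.log N + (c₀ / 2) * Real.log N := by
      have hcoef : (0:ℝ) ≤ h / 2 * ((1 + b) / b) := by positivity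
      have h2 := mul_le_mul_of_nonneg_left hdrop hcoef
      calc c₀ * Real.log N ≤ GG b N h := hS
        _ ≤ h / 2 * ((1 + b) / b) * (Real.log (b * N + 1 + h / 2) - Real.log (1 + h / 2))
            + (1 + 1 / b) := hGU
        _ ≤ h / 2 * ((1 + b) / b) * (2 * Real.log N) + (c₀ / 2) * Real.log N :=
            add_le_add h2 hsmall
        _ = h * ((1 + b) / b) * Real.log N + (c₀ / 2) * Real.log N := by ring
    have h3 : (c₀ / 2) * Real.log N ≤ h * ((1 + b) / b) * Real.log N := by linarith
    have h4 : c₀ / 2 ≤ h * ((1 + b) / b) := (mul_le_mul_iff_of_pos_right hlogN).1 h3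
    calc min 1 (c₀ * b / (2 * (1 + b))) ≤ c₀ * b / (2 * (1 + b)) := min_le_right _ _
      _ ≤ h := by
          rw [div_le_iff₀ (by positivity)]
          have h5 : h * ((1 + b) / b) * b = h * (1 + b) := by field_simp
          have h6 := mul_le_mul_of_nonneg_right h4 hb.le
          rw [h5] at h6
          linarith [h6]

end Pointwise
end CbetaEAux


open CbetaE in
/-- Characterization of the regime of moderate deviations / balanced sequences
(Proposition 2.9). Here `a_N = Λ'_{N,β}(β λ_N)` and `v_N = Λ''_{N,β}(β λ_N)`;
`liminf > 0` conditions are phrased as eventual lower bounds. -/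
theorem moderate_regime_characterization (β : ℝ) (hβ : 0 < β) (a l : ℕ → ℝ)
    (ha : ∀ N : ℕ, 1 ≤ N → 0 < a N ∧ a N < (N : ℝ) * Real.log 2)
    (hl : ∀ N : ℕ, 1 ≤ N → 0 < l N)
    (heq : ∀ N : ℕ, 1 ≤ N → deriv (Lam β N) (β * l N) = a N) :
    (((∃ c > (0 : ℝ), ∀ᶠ N : ℕ in atTop, c ≤ l N) ∧
        Tendsto (fun N : ℕ => deriv (deriv (Lam β N)) (β * l N)) atTop atTop) ↔
      ((∃ c > (0 : ℝ), ∀ᶠ N : ℕ in atTop, c ≤ l N) ∧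
        Tendsto (fun N : ℕ => l N / N) atTop (nhds 0))) ∧
    (((∃ c > (0 : ℝ), ∀ᶠ N : ℕ in atTop, c ≤ l N) ∧
        Tendsto (fun N : ℕ => l N / N) atTop (nhds 0)) ↔
      ((∃ c > (0 : ℝ), ∀ᶠ N : ℕ in atTop, c ≤ a N / Real.log N) ∧
        Tendsto (fun N : ℕ => a N / N) atTop (nhds 0))) := by
  have hb : 0 < β / 2 := by linarith
  have hwpos : ∀ N : ℕ, 1 ≤ N → 0 < β * l N := fun N hN => by
    have := hl N hN
    positivity
  have haG : ∀ N : ℕ, 1 ≤ N → a N = CbetaEAux.GG (β / 2) N (β * l N) := by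
    intro N hN
    rw [← heq N hN, show Lam β N = CbetaEAux.LamD β N from rfl]
    exact CbetaEAux.deriv_LamD_eq hβ (hwpos N hN)
  have hvG : ∀ N : ℕ, 1 ≤ N →
      deriv (deriv (Lam β N)) (β * l N) = CbetaEAux.GG' (β / 2) N (β * l N) := by
    intro N hN
    rw [show Lam β N = CbetaEAux.LamD β N from rfl]
    exact CbetaEAux.deriv2_LamD_eq hβ (hwpos N hN)
  -- (Q → R)
  have QR : Tendsto (fun N : ℕ => deriv (deriv (Lam β N)) (β * l N)) atTop atTop →
      Tendsto (fun N : ℕ => l N / N) atTop (nhds 0) := by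
    intro hQ
    rw [Metric.tendsto_nhds]
    intro ε hε
    have hβε : 0 < β * ε := by positivity
    set M : ℝ := ((1 + β / 2) / (β / 2)) * Real.log ((β / 2) / (β * ε) + 1) + (1 + 1 / (β / 2))
      with hM
    filter_upwards [hQ.eventually_gt_atTop M, eventually_ge_atTop 1] with N hvN hN1
    have hN0 : (0:ℝ) < N := by exact_mod_cast hN1
    have hlN := hl N hN1
    rw [Real.dist_eq, sub_zero, abs_of_nonneg (by positivity)]
    by_contra hcon
    push_neg at hcon
    have hup : (β * ε) * N ≤ β * l N := by
      have h1 : ε * N ≤ l N := (le_div_iff₀ hN0).1 hcon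
      calc (β * ε) * N = β * (ε * N) := by ring
        _ ≤ β * l N := mul_le_mul_of_nonneg_left h1 hβ.le
    have hVU := CbetaEAux.VU_bound hb (hwpos N hN1) hN0 hβε hup
    rw [hvG N hN1] at hvN
    rw [hM] at hvN
    linarith
  -- (R → Q)
  have RQ : Tendsto (fun N : ℕ => l N / N) atTop (nhds 0) →
      Tendsto (fun N : ℕ => deriv (deriv (Lam β N)) (β * l N)) atTop atTop := by
    intro hR
    have h1 : Tendsto (fun N : ℕ => (β * l N + β / 2 + 1) / ((β / 2) * N + 1)) atTop (nhds 0) := by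
      apply squeeze_zero' (g := fun N : ℕ =>
        (β / (β / 2)) * (l N / N) + ((β / 2 + 1) / (β / 2)) * (1 / N))
      · filter_upwards [eventually_ge_atTop 1] with N hN1
        have hN0 : (0:ℝ) < N := by exact_mod_cast hN1
        have := (hwpos N hN1).le
        positivity
      · filter_upwards [eventually_ge_atTop 1] with N hN1
        have hN0 : (0:ℝ) < N := by exact_mod_cast hN1
        have hbN : 0 < (β / 2) * N := by positivity
        have e : (β / (β / 2)) * (l N / N) + ((β / 2 + 1) / (β / 2)) * (1 / N)
            = (β * l N + β / 2 + 1) / ((β / 2) * N) := by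
          field_simp
          ring
        rw [e]
        exact div_le_div_of_nonneg_left (by have := (hwpos N hN1).le; positivity) hbN
          (by linarith)
      · have t1 : Tendsto (fun N : ℕ => (β / (β / 2)) * (l N / N)) atTop (nhds 0) := by
          have := hR.const_mul (β / (β / 2))
          simpa using this
        have t2 : Tendsto (fun N : ℕ => ((β / 2 + 1) / (β / 2)) * (1 / (N:ℝ))) atTop (nhds 0) := by
          have := tendsto_one_div_atTop_nhds_zero_nat.const_mul ((β / 2 + 1) / (β / 2))
          simpa using this
        simpa using t1.add t2
    have hpos : ∀ᶠ N : ℕ in atTop,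
        (β * l N + β / 2 + 1) / ((β / 2) * N + 1) ∈ Set.Ioi (0:ℝ) := by
      filter_upwards [eventually_ge_atTop 1] with N hN1
      have hN0 : (0:ℝ) < N := by exact_mod_cast hN1
      have := hwpos N hN1
      exact Set.mem_Ioi.2 (by positivity)
    have h2 : Tendsto (fun N : ℕ => ((β / 2) * N + 1) / (β * l N + β / 2 + 1)) atTop atTop := by
      have h3 := Filter.Tendsto.inv_tendsto_nhdsGT_zero (tendsto_nhdsWithin_iff.2 ⟨h1, hpos⟩)
      apply h3.congr
      intro N
      simp [inv_div]
    have h3 : Tendsto (fun N : ℕ =>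
        (1 / (6 * (β / 2))) * Real.log (((β / 2) * N + 1) / (β * l N + β / 2 + 1))
          - (1 / 2) * (1 + 1 / (β / 2))) atTop atTop := by
      apply tendsto_atTop_add_const_right
      exact (Real.tendsto_log_atTop.comp h2).const_mul_atTop (by positivity)
    apply tendsto_atTop_mono' atTop _ h3
    filter_upwards [eventually_ge_atTop 1] with N hN1
    have hh := hwpos N hN1
    have hN0 : (0:ℝ) < N := by exact_mod_cast hN1
    rw [hvG N hN1]
    have hlow := CbetaEAux.GG'_lower (N := N) hb hh
    have e : Real.log (((β / 2) * N + 1) / (β * l N + β / 2 + 1))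
        = Real.log ((β / 2) * N + 1) - Real.log (β * l N + β / 2 + 1) := by
      rw [Real.log_div (by positivity) (by positivity)]
    rw [e]
    linarith
  -- (R → T)
  have RT : Tendsto (fun N : ℕ => l N / N) atTop (nhds 0) →
      Tendsto (fun N : ℕ => a N / N) atTop (nhds 0) := by
    intro hR
    have hu : Tendsto (fun N : ℕ => (β * l N) / N) atTop (nhds 0) := by
      have := hR.const_mul β
      simpa [mul_div_assoc] using this
    apply squeeze_zero' (g := fun N : ℕ =>
      ((1 + β / 2) / (β / 2)) * ((β * l N) / N)
        + (((1 + β / 2) / (β / 2)) * Real.sqrt (2 * (β / 2))) * Real.sqrt ((β * l N) / N)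
        + (1 + 1 / (β / 2)) * (1 / N))
    · filter_upwards [eventually_ge_atTop 1] with N hN1
      have hN0 : (0:ℝ) < N := by exact_mod_cast hN1
      have := (ha N hN1).1
      positivity
    · filter_upwards [eventually_ge_atTop 1] with N hN1
      have hN1' : (1:ℝ) ≤ N := by exact_mod_cast hN1
      rw [haG N hN1]
      exact CbetaEAux.AU_div_bound hb (hwpos N hN1) hN1'
    · have t1 := hu.const_mul ((1 + β / 2) / (β / 2))
      have t2 : Tendsto (fun N : ℕ => Real.sqrt ((β * l N) / N)) atTop (nhds 0) := by
        have hc : Tendsto Real.sqrt (nhds 0) (nhds 0) := by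
          have := Real.continuous_sqrt.tendsto 0
          simpa using this
        exact hc.comp hu
      have t2' := t2.const_mul (((1 + β / 2) / (β / 2)) * Real.sqrt (2 * (β / 2)))
      have t3 := tendsto_one_div_atTop_nhds_zero_nat.const_mul (1 + 1 / (β / 2))
      have := (t1.add t2').add t3
      simpa using this
  -- (P ∧ R → S)
  have PRS : (∃ c > (0:ℝ), ∀ᶠ N : ℕ in atTop, c ≤ l N) →
      Tendsto (fun N : ℕ => l N / N) atTop (nhds 0) →
      ∃ c > (0:ℝ), ∀ᶠ N : ℕ in atTop, c ≤ a N / Real.log N := by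
    rintro ⟨c, hc, hev⟩ hR
    refine ⟨min 1 ((β * c) / (8 * (β / 2))), by positivity, ?_⟩
    have E3 : ∀ᶠ N : ℕ in atTop, β * l N ≤ N := by
      filter_upwards [Metric.tendsto_nhds.1 hR (1 / β) (by positivity),
        eventually_ge_atTop 1] with N h1 hN1
      rw [Real.dist_eq, sub_zero] at h1
      have hN0 : (0:ℝ) < N := by exact_mod_cast hN1
      have h2 : l N / N < 1 / β := lt_of_abs_lt h1
      rw [div_lt_div_iff₀ hN0 hβ] at h2
      linarith
    have E4 := CbetaEAux.ev_log_le_sqrt (2 * (β / 2 + 2))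
    have E5 : ∀ᶠ N : ℕ in atTop, 0 ≤ Real.log ((β / 2) / 2) + (1 / 4) * Real.log N := by
      have hlim : Tendsto (fun N : ℕ => Real.log N) atTop atTop :=
        Real.tendsto_log_atTop.comp tendsto_natCast_atTop_atTop
      filter_upwards [hlim.eventually_ge_atTop (4 * (-Real.log ((β / 2) / 2)))] with N hN
      linarith
    filter_upwards [hev, E3, E4, E5, eventually_ge_atTop 2] with N h2 h3 h4 h5 h6
    have hN1 : 1 ≤ N := le_trans one_le_two h6
    rw [haG N hN1]
    have hch : β * c ≤ β * l N := mul_le_mul_of_nonneg_left h2 hβ.le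
    exact CbetaEAux.S_pointwise hb (by positivity) (hwpos N hN1) hch h3 h6 h4 h5
  -- (S → P)
  have SP : (∃ c > (0:ℝ), ∀ᶠ N : ℕ in atTop, c ≤ a N / Real.log N) →
      ∃ c > (0:ℝ), ∀ᶠ N : ℕ in atTop, c ≤ l N := by
    rintro ⟨c₀, hc₀, hev⟩
    refine ⟨min 1 (c₀ * (β / 2) / (2 * (1 + β / 2))) / β, by positivity, ?_⟩
    have hlim : Tendsto (fun N : ℕ => Real.log N) atTop atTop :=
      Real.tendsto_log_atTop.comp tendsto_natCast_atTop_atTop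
    have E1 : ∀ᶠ N : ℕ in atTop, (1 + 1 / (β / 2)) ≤ (c₀ / 2) * Real.log N := by
      filter_upwards [hlim.eventually_ge_atTop ((1 + 1 / (β / 2)) / (c₀ / 2))] with N hN
      rw [div_le_iff₀ (by positivity)] at hN
      linarith
    have E2 : ∀ᶠ N : ℕ in atTop, (β / 2) + 2 ≤ (N:ℝ) :=
      tendsto_natCast_atTop_atTop.eventually_ge_atTop ((β / 2) + 2)
    filter_upwards [hev, E1, E2, eventually_ge_atTop 2] with N h1 h2 h3 h4
    have hN1 : 1 ≤ N := le_trans one_le_two h4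
    have hN1' : (1:ℝ) < N := by
      have : (2:ℝ) ≤ N := by exact_mod_cast h4
      linarith
    have hlogN : 0 < Real.log N := Real.log_pos hN1'
    have hS : c₀ * Real.log N ≤ CbetaEAux.GG (β / 2) N (β * l N) := by
      rw [← haG N hN1]
      rw [le_div_iff₀ hlogN] at h1
      linarith
    have hP := CbetaEAux.P_pointwise hb hc₀ (hwpos N hN1) hS h4 h3 h2
    rw [div_le_iff₀ hβ]
    linarith
  -- (T → R)
  have TR : Tendsto (fun N : ℕ => a N / N) atTop (nhds 0) →
      Tendsto (fun N : ℕ => l N / N) atTop (nhds 0) := by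
    intro hT
    rw [Metric.tendsto_nhds]
    intro ε hε
    have hβε : 0 < β * ε := by positivity
    set δ : ℝ := (β * ε) / (2 * (β / 2 + 1 + β * ε)) with hδ
    have hδ0 : 0 < δ := by rw [hδ]; positivity
    filter_upwards [Metric.tendsto_nhds.1 hT δ hδ0, eventually_ge_atTop 1] with N h1 hN1
    rw [Real.dist_eq, sub_zero] at h1
    have hN0 : (0:ℝ) < N := by exact_mod_cast hN1
    have hlN := hl N hN1
    rw [Real.dist_eq, sub_zero, abs_of_nonneg (by positivity)]
    by_contra hcon
    push_neg at hcon
    have hup : (β * ε) * N ≤ β * l N := by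
      have h2 : ε * N ≤ l N := (le_div_iff₀ hN0).1 hcon
      calc (β * ε) * N = β * (ε * N) := by ring
        _ ≤ β * l N := mul_le_mul_of_nonneg_left h2 hβ.le
    have hTp := CbetaEAux.T_pointwise hb (hwpos N hN1) (by exact_mod_cast hN1) hβε hup
    rw [← haG N hN1] at hTp
    have habs : a N / N ≤ |a N / N| := le_abs_self _
    rw [hδ] at h1
    linarith
  constructor
  · constructor
    · rintro ⟨hP, hQ⟩
      exact ⟨hP, QR hQ⟩
    · rintro ⟨hP, hR⟩
      exact ⟨hP, RQ hR⟩
  · constructor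
    · rintro ⟨hP, hR⟩
      exact ⟨PRS hP hR, RT hR⟩
    · rintro ⟨hS, hT⟩
      exact ⟨SP hS, TR hT⟩
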